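/- Asymptotic for the exponentiated digamma: exp(ψ'(c)) = c − 1/2 + O(1/c) as c → ∞, where ψ' is the digamma function. Equivalently, c·(exp(ψ'(c)) − c + 1/2) is bounded as c → ∞. -/

import Mathlib

open Real Filter Asymptotics Set

noncomputable def ψ : ℝ → ℝ := deriv (fun t => Real.log (Real.Gamma t))

lemma lg_diff {x : ℝ} (hx : 0 < x) :
    DifferentiableAt ℝ (fun t => Real.log (Real.Gamma t)) x := by
  exact (Real.differentiableAt_Gamma (fun m ↦ by linarith)).log
    (Real.Gamma_ne_zero (fun m ↦ by linarith))

lemma lg_rec (x : ℝ) (hx : 0 < x) :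
    Real.log (Real.Gamma (x + 1)) = Real.log (Real.Gamma x) + Real.log x := by
  rw [Real.Gamma_add_one hx.ne', Real.log_mul hx.ne' (Real.Gamma_pos_of_pos hx).ne', add_comm]

lemma psi_rec (x : ℝ) (hx : 0 < x) : ψ (x + 1) = ψ x + 1 / x := by
  unfold ψ
  rw [← deriv_comp_add_const, one_div, ← Real.deriv_log,
    ← deriv_add (lg_diff hx) (Real.differentiableAt_log hx.ne')]
  apply Filter.EventuallyEq.deriv_eq
  filter_upwards [eventually_gt_nhds hx] with y hy using lg_rec y hy

lemma lg_convex : ConvexOn ℝ (Ioi 0) (fun t => Real.log (Real.Gamma t)) := by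
  simpa [Function.comp_def] using Real.convexOn_log_Gamma

lemma psi_le_log (x : ℝ) (hx : 0 < x) : ψ x ≤ Real.log x := by
  have h := lg_convex.deriv_le_slope (mem_Ioi.mpr hx) (mem_Ioi.mpr (by linarith : (0:ℝ) < x + 1))
    (by linarith) (lg_diff hx)
  rwa [slope_def_field, show x + 1 - x = (1:ℝ) by ring, div_one, lg_rec x hx,
    add_sub_cancel_left] at h

lemma log_le_psi (x : ℝ) (hx : 0 < x) : Real.log x - 1 / x ≤ ψ x := by
  have h := lg_convex.slope_le_deriv (mem_Ioi.mpr hx) (mem_Ioi.mpr (by linarith : (0:ℝ) < x + 1))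
    (by linarith) (lg_diff (by linarith : (0:ℝ) < x + 1))
  rw [slope_def_field, show x + 1 - x = (1:ℝ) by ring, div_one, lg_rec x hx,
    add_sub_cancel_left, ← ψ, psi_rec x hx] at h
  linarith

theorem test : True := trivial

lemma hDerivH (u : ℝ) (h1 : -1 < u) (h2 : u < 1) :
    HasDerivAt (fun u => Real.log (1+u) - Real.log (1-u) - 2*u)
      (1/(1+u) + 1/(1-u) - 2) u := by
  have a : HasDerivAt (fun u : ℝ => 1+u) 1 u := by simpa using (hasDerivAt_id u).const_add 1
  have b : HasDerivAt (fun u : ℝ => 1-u) (-1) u := by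
    simpa using (hasDerivAt_id u).const_sub 1
  have la := a.log (by linarith)
  have lb := b.log (by linarith)
  have lc : HasDerivAt (fun u : ℝ => 2*u) 2 u := by
    simpa using (hasDerivAt_id u).const_mul 2
  refine ((la.sub lb).sub lc).congr_deriv ?_
  ring

lemma key (u : ℝ) (h0 : 0 ≤ u) (h2 : u ≤ 1/2) :
    0 ≤ Real.log (1+u) - Real.log (1-u) - 2*u ∧
      Real.log (1+u) - Real.log (1-u) - 2*u ≤ u^3 := by
  set H : ℝ → ℝ := fun u => Real.log (1+u) - Real.log (1-u) - 2*u with hH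
  have hint : interior (Icc (0:ℝ) (1/2)) = Ioo 0 (1/2) := interior_Icc
  have hd : ∀ x ∈ Icc (0:ℝ) (1/2), HasDerivAt H (1/(1+x) + 1/(1-x) - 2) x := by
    intro x hx
    exact hDerivH x (by linarith [hx.1]) (by linarith [hx.2])
  have hdiff : DifferentiableOn ℝ H (Icc (0:ℝ) (1/2)) :=
    fun x hx => (hd x hx).differentiableAt.differentiableWithinAt
  have hcont : ContinuousOn H (Icc (0:ℝ) (1/2)) := hdiff.continuousOn
  constructor
  · have mono : MonotoneOn H (Icc (0:ℝ) (1/2)) := by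
      apply monotoneOn_of_deriv_nonneg (convex_Icc _ _) hcont
        (hdiff.mono (by rw [hint]; exact Ioo_subset_Icc_self))
      intro x hx
      rw [hint] at hx
      rw [(hd x (Ioo_subset_Icc_self hx)).deriv]
      have p1 : (0:ℝ) < 1+x := by linarith [hx.1]
      have p2 : (0:ℝ) < 1-x := by linarith [hx.2]
      rw [sub_nonneg, div_add_div _ _ p1.ne' p2.ne', le_div_iff₀ (by positivity)]
      nlinarith [sq_nonneg x]
    have := mono (left_mem_Icc.mpr (by norm_num)) (mem_Icc.mpr ⟨h0, h2⟩) h0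
    simpa [hH] using this
  · set K : ℝ → ℝ := fun u => u^3 - H u with hK
    have hdK : ∀ x ∈ Icc (0:ℝ) (1/2), HasDerivAt K (3*x^2 - (1/(1+x) + 1/(1-x) - 2)) x := by
      intro x hx
      have : HasDerivAt (fun u : ℝ => u^3) (3*x^2) x := by
        simpa using hasDerivAt_pow 3 x
      exact this.sub (hd x hx)
    have hdiffK : DifferentiableOn ℝ K (Icc (0:ℝ) (1/2)) :=
      fun x hx => (hdK x hx).differentiableAt.differentiableWithinAt
    have mono : MonotoneOn K (Icc (0:ℝ) (1/2)) := by
      apply monotoneOn_of_deriv_nonneg (convex_Icc _ _) hdiffK.continuousOn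
        (hdiffK.mono (by rw [hint]; exact Ioo_subset_Icc_self))
      intro x hx
      rw [hint] at hx
      rw [(hdK x (Ioo_subset_Icc_self hx)).deriv]
      have p1 : (0:ℝ) < 1+x := by linarith [hx.1]
      have p2 : (0:ℝ) < 1-x := by linarith [hx.2]
      have e : 1/(1+x) + 1/(1-x) - 2 = 2*x^2 / ((1+x)*(1-x)) := by field_simp; ring
      rw [e, sub_nonneg, div_le_iff₀ (by positivity)]
      have hx2 : x^2 ≤ 1/4 := by nlinarith [hx.1.le, hx.2.le]
      nlinarith [sq_nonneg x, hx2]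
    have := mono (left_mem_Icc.mpr (by norm_num)) (mem_Icc.mpr ⟨h0, h2⟩) h0
    simp only [hK, hH] at this
    norm_num at this
    linarith [this]

noncomputable def gg : ℝ → ℝ := fun y => ψ y - Real.log (y - 1/2)

lemma gg_step (y : ℝ) (hy : 2 ≤ y) :
    0 ≤ gg y - gg (y+1) ∧ gg y - gg (y+1) ≤ 1/(16*(y-1)^2) - 1/(16*y^2) := by
  have hy0 : (0:ℝ) < y := by linarith
  have hu0 : (0:ℝ) ≤ 1/(2*y) := by positivity
  have hu2 : 1/(2*y) ≤ 1/2 := by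
    rw [div_le_div_iff₀ (by linarith) (by norm_num)]; linarith
  have e1 : y * (1 + 1/(2*y)) = y + 1/2 := by field_simp
  have e2 : y * (1 - 1/(2*y)) = y - 1/2 := by field_simp
  have heq : gg y - gg (y+1) =
      Real.log (1 + 1/(2*y)) - Real.log (1 - 1/(2*y)) - 2*(1/(2*y)) := by
    unfold gg
    rw [psi_rec y hy0]
    have l1 : Real.log (y + 1/2) = Real.log y + Real.log (1 + 1/(2*y)) := by
      rw [← e1, Real.log_mul hy0.ne' (by nlinarith)]
    have l2 : Real.log (y - 1/2) = Real.log y + Real.log (1 - 1/(2*y)) := by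
      rw [← e2, Real.log_mul hy0.ne' (by nlinarith)]
    have e3 : y + 1 - 1/2 = y + 1/2 := by ring
    rw [e3, l1, l2]
    field_simp
    ring
  obtain ⟨k1, k2⟩ := key (1/(2*y)) hu0 hu2
  constructor
  · rw [heq]; linarith
  · rw [heq]
    have hcube : (1/(2*y))^3 ≤ 1/(16*(y-1)^2) - 1/(16*y^2) := by
      have hy1 : (0:ℝ) < y - 1 := by linarith
      have e : 1/(16*(y-1)^2) - 1/(16*y^2) = (2*y-1)/(16*(y-1)^2*y^2) := by
        field_simp; ring
      rw [e, div_pow, div_le_div_iff₀ (by positivity) (by positivity)]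
      nlinarith [sq_nonneg (y-1), hy0]
    linarith

lemma gg_tele (x : ℝ) (hx : 2 ≤ x) (n : ℕ) :
    0 ≤ gg x - gg (x + n) ∧ gg x - gg (x + n) ≤ 1/(16*(x-1)^2) - 1/(16*(x + n - 1)^2) := by
  induction n with
  | zero => simp
  | succ n ih =>
    obtain ⟨ih1, ih2⟩ := ih
    have hxn : 2 ≤ x + n := by
      have : (0:ℝ) ≤ n := Nat.cast_nonneg n
      linarith
    obtain ⟨s1, s2⟩ := gg_step (x + n) hxn
    have e : x + (n+1 : ℕ) = (x + n) + 1 := by push_cast; ring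
    rw [e]
    constructor
    · linarith
    · have e2 : x + (n:ℝ) + 1 - 1 = x + (n:ℝ) := by ring
      rw [e2]
      linarith

lemma gg_small (y : ℝ) (hy : 2 ≤ y) : -(1/y) ≤ gg y ∧ gg y ≤ 1/y := by
  have hy0 : (0:ℝ) < y := by linarith
  have hy2 : (0:ℝ) < y - 1/2 := by linarith
  unfold gg
  constructor
  · have h1 := log_le_psi y hy0
    have h2 : Real.log (y - 1/2) ≤ Real.log y := Real.log_le_log hy2 (by linarith)
    linarith
  · have h1 := psi_le_log y hy0
    have h2 : Real.log y - Real.log (y - 1/2) ≤ 1/y := by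
      rw [← Real.log_div hy0.ne' hy2.ne']
      have h3 : Real.log (y/(y-1/2)) ≤ y/(y-1/2) - 1 :=
        Real.log_le_sub_one_of_pos (by positivity)
      have h4 : y/(y-1/2) - 1 = (1/2)/(y-1/2) := by
        rw [eq_div_iff hy2.ne', sub_mul, div_mul_cancel₀ _ hy2.ne']
        ring
      have h5 : (1/2 : ℝ)/(y-1/2) ≤ 1/y := by
        rw [div_le_div_iff₀ hy2 hy0]; linarith
      linarith
    linarith

lemma gg_tendsto (x : ℝ) (hx : 2 ≤ x) :
    Filter.Tendsto (fun n : ℕ => gg (x + n)) atTop (nhds 0) := by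
  have h1 : Filter.Tendsto (fun n : ℕ => x + (n:ℝ)) atTop atTop :=
    tendsto_atTop_add_const_left _ x tendsto_natCast_atTop_atTop
  have hb : Filter.Tendsto (fun n : ℕ => 1/(x + (n:ℝ))) atTop (nhds 0) := by
    simpa [one_div, Pi.inv_def] using h1.inv_tendsto_atTop
  have hbneg : Filter.Tendsto (fun n : ℕ => -(1/(x + (n:ℝ)))) atTop (nhds 0) := by
    simpa using hb.neg
  refine tendsto_of_tendsto_of_tendsto_of_le_of_le hbneg hb ?_ ?_
  · intro n
    exact (gg_small (x + n) (by linarith [Nat.cast_nonneg (α := ℝ) n])).1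
  · intro n
    exact (gg_small (x + n) (by linarith [Nat.cast_nonneg (α := ℝ) n])).2

lemma gg_bound (x : ℝ) (hx : 2 ≤ x) : 0 ≤ gg x ∧ gg x ≤ 1/(4*x^2) := by
  have ht : Filter.Tendsto (fun n : ℕ => gg x - gg (x + n)) atTop (nhds (gg x)) := by
    simpa using (tendsto_const_nhds.sub (gg_tendsto x hx))
  constructor
  · exact ge_of_tendsto' ht fun n => (gg_tele x hx n).1
  · have h1 : gg x ≤ 1/(16*(x-1)^2) := by
      refine le_of_tendsto' ht fun n => le_trans (gg_tele x hx n).2 ?_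
      have : (0:ℝ) ≤ 1/(16*(x + n - 1)^2) := by positivity
      linarith
    have h2 : 1/(16*(x-1)^2) ≤ 1/(4*x^2) := by
      have hx1 : (0:ℝ) < x - 1 := by linarith
      rw [div_le_div_iff₀ (by positivity) (by positivity)]
      nlinarith
    linarith

/-- Asymptotic for the exponentiated digamma:
exp(ψ'(c)) = c - 1/2 + O(1/c) as c → ∞. -/
theorem exp_digamma_asymptotic :
    (fun c : ℝ =>
        Real.exp (deriv (fun t => Real.log (Real.Gamma t)) c) - (c - 1/2))
      =O[atTop] fun c : ℝ => 1 / c := by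
  rw [Asymptotics.isBigO_iff]
  use 2
  filter_upwards [eventually_ge_atTop (2:ℝ)] with c hc
  have hc0 : (0:ℝ) < c := by linarith
  have hc2 : (0:ℝ) < c - 1/2 := by linarith
  obtain ⟨hg0, hg1⟩ := gg_bound c hc
  have hgdef : ψ c = Real.log (c - 1/2) + gg c := by unfold gg; ring
  have hexp : Real.exp (ψ c) = (c - 1/2) * Real.exp (gg c) := by
    rw [hgdef, Real.exp_add, Real.exp_log hc2]
  have hgle : gg c ≤ 1/2 := by
    have : 1/(4*c^2) ≤ 1/2 := by
      rw [div_le_div_iff₀ (by positivity) (by norm_num)]; nlinarith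
    linarith
  have hub : Real.exp (gg c) - 1 ≤ 2 * gg c := by
    have h1 : 1 - gg c ≤ Real.exp (-(gg c)) := by
      linarith [Real.add_one_le_exp (-(gg c))]
    have h2 : Real.exp (gg c) ≤ 1/(1 - gg c) := by
      rw [le_div_iff₀ (by linarith)]
      calc Real.exp (gg c) * (1 - gg c) ≤ Real.exp (gg c) * Real.exp (-(gg c)) := by
            apply mul_le_mul_of_nonneg_left h1 (Real.exp_nonneg _)
        _ = 1 := by rw [← Real.exp_add, add_neg_cancel, Real.exp_zero]
    have hpos : (0:ℝ) < 1 - gg c := by linarith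
    have h3 : 1/(1 - gg c) - 1 = gg c / (1 - gg c) := by
      rw [eq_div_iff hpos.ne', sub_mul, one_div, inv_mul_cancel₀ hpos.ne']
      ring
    have h4 : gg c / (1 - gg c) ≤ 2 * gg c := by
      rw [div_le_iff₀ (by linarith)]
      nlinarith
    linarith
  have hlb : (0:ℝ) ≤ Real.exp (gg c) - 1 := by
    have := Real.one_le_exp hg0
    linarith
  have key1 : Real.exp (ψ c) - (c - 1/2) = (c - 1/2) * (Real.exp (gg c) - 1) := by
    rw [hexp]; ring
  have keyub : Real.exp (ψ c) - (c - 1/2) ≤ 2/c := by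
    rw [key1]
    have : (c - 1/2) * (Real.exp (gg c) - 1) ≤ (c - 1/2) * (2 * (1/(4*c^2))) := by
      apply mul_le_mul_of_nonneg_left _ (by linarith)
      linarith
    calc (c - 1/2) * (Real.exp (gg c) - 1) ≤ (c - 1/2) * (2 * (1/(4*c^2))) := this
      _ ≤ 2/c := by
          have e : (c - 1/2) * (2 * (1/(4*c^2))) = (c - 1/2)/(2*c^2) := by ring
          rw [e, div_le_div_iff₀ (by positivity) hc0]
          nlinarith
  have keylb : (0:ℝ) ≤ Real.exp (ψ c) - (c - 1/2) := by
    rw [key1]; positivity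
  have hpsi : deriv (fun t => Real.log (Real.Gamma t)) c = ψ c := rfl
  rw [hpsi, Real.norm_eq_abs, Real.norm_eq_abs, abs_of_nonneg keylb,
    abs_of_nonneg (by positivity : (0:ℝ) ≤ 1/c)]
  calc Real.exp (ψ c) - (c - 1/2) ≤ 2/c := keyub
    _ = 2 * (1/c) := by ring
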